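/- If a Banach space X is smooth and CLUR, then X is HLUR. -/

import Mathlib

open Metric Filter Topology NormedSpace

noncomputable section

/-- The face `S(X, f, 0) = {y ∈ B_X : f(y) = 1}` determined by a functional `f`. -/
def face (X : Type*) [NormedAddCommGroup X] [NormedSpace ℝ X] (f : X →L[ℝ] ℝ) : Set X :=
  {y | ‖y‖ ≤ 1 ∧ f y = 1}

/-- Property (HS). -/
def HSProp (X : Type*) [NormedAddCommGroup X] [NormedSpace ℝ X] : Prop :=
  ∀ f : X →L[ℝ] ℝ, ‖f‖ = 1 → (face X f).Nonempty →
    ∀ xs : ℕ → X, (∀ n, ‖xs n‖ ≤ 1) →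
      Tendsto (fun n => f (xs n)) atTop (𝓝 1) →
      Tendsto (fun n => infDist (xs n) (face X f)) atTop (𝓝 0)

/-- Property (HLUR). -/
def HLUR (X : Type*) [NormedAddCommGroup X] [NormedSpace ℝ X] : Prop :=
  ∀ x : X, ‖x‖ = 1 → ∀ xs : ℕ → X, (∀ n, ‖xs n‖ = 1) →
    Tendsto (fun n => ‖xs n + x‖) atTop (𝓝 2) →
    ∀ f : X →L[ℝ] ℝ, ‖f‖ = 1 → f x = 1 →
      Tendsto (fun n => infDist (xs n) (face X f)) atTop (𝓝 0)

/-- Local uniform rotundity. -/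
def LUR (X : Type*) [NormedAddCommGroup X] [NormedSpace ℝ X] : Prop :=
  ∀ x : X, ‖x‖ = 1 → ∀ xs : ℕ → X, (∀ n, ‖xs n‖ = 1) →
    Tendsto (fun n => ‖xs n + x‖) atTop (𝓝 2) → Tendsto xs atTop (𝓝 x)

/-- Compact local uniform rotundity. -/
def CLUR (X : Type*) [NormedAddCommGroup X] [NormedSpace ℝ X] : Prop :=
  ∀ x : X, ‖x‖ = 1 → ∀ xs : ℕ → X, (∀ n, ‖xs n‖ = 1) →
    Tendsto (fun n => ‖xs n + x‖) atTop (𝓝 2) →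
    ∃ φ : ℕ → ℕ, StrictMono φ ∧ ∃ z : X, Tendsto (xs ∘ φ) atTop (𝓝 z)

/-- Local U-convexity. -/
def LocallyUConvex (X : Type*) [NormedAddCommGroup X] [NormedSpace ℝ X] : Prop :=
  ∀ x : X, ‖x‖ = 1 → ∀ xs : ℕ → X, (∀ n, ‖xs n‖ = 1) →
    Tendsto (fun n => ‖xs n + x‖) atTop (𝓝 2) →
    ∃ f : X →L[ℝ] ℝ, ‖f‖ = 1 ∧ f x = 1 ∧ Tendsto (fun n => f (xs n)) atTop (𝓝 1)

/-- Strong local U-convexity. -/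
def StronglyLocallyUConvex (X : Type*) [NormedAddCommGroup X] [NormedSpace ℝ X] : Prop :=
  ∀ x : X, ‖x‖ = 1 → ∀ xs : ℕ → X, (∀ n, ‖xs n‖ = 1) →
    Tendsto (fun n => ‖xs n + x‖) atTop (𝓝 2) →
    ∀ f : X →L[ℝ] ℝ, ‖f‖ = 1 → f x = 1 → Tendsto (fun n => f (xs n)) atTop (𝓝 1)

/-- Rotundity (strict convexity): every face has at most one element. -/
def Rotund (X : Type*) [NormedAddCommGroup X] [NormedSpace ℝ X] : Prop :=
  ∀ f : X →L[ℝ] ℝ, ‖f‖ = 1 → (face X f).Subsingleton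

/-- Near strict convexity: every face is norm-compact. -/
def NSC (X : Type*) [NormedAddCommGroup X] [NormedSpace ℝ X] : Prop :=
  ∀ f : X →L[ℝ] ℝ, ‖f‖ = 1 → IsCompact (face X f)

/-- Kadets-Klee property. -/
def KadetsKlee (X : Type*) [NormedAddCommGroup X] [NormedSpace ℝ X] : Prop :=
  ∀ (xs : ℕ → X) (x : X),
    (∀ f : X →L[ℝ] ℝ, Tendsto (fun n => f (xs n)) atTop (𝓝 (f x))) →
    Tendsto (fun n => ‖xs n‖) atTop (𝓝 ‖x‖) → Tendsto xs atTop (𝓝 x)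

/-- Alternatively convex or smooth. -/
def ACS (X : Type*) [NormedAddCommGroup X] [NormedSpace ℝ X] : Prop :=
  ∀ x y : X, ‖x‖ = 1 → ‖y‖ = 1 → ∀ f : X →L[ℝ] ℝ, ‖f‖ = 1 →
    ‖x + y‖ = 2 → f x = 1 → f y = 1

/-- Smoothness: each unit vector has a unique norming functional. -/
def SmoothSpace (X : Type*) [NormedAddCommGroup X] [NormedSpace ℝ X] : Prop :=
  ∀ x : X, ‖x‖ = 1 → ∃! f : X →L[ℝ] ℝ, ‖f‖ = 1 ∧ f x = 1

/-- Reflexivity of a normed space. -/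
def ReflexiveSpace (X : Type*) [NormedAddCommGroup X] [NormedSpace ℝ X] : Prop :=
  Function.Surjective (inclusionInDoubleDual ℝ X)

/-- Strong rotundity: reflexive, rotund and Kadets-Klee. -/
def StronglyRotund (X : Type*) [NormedAddCommGroup X] [NormedSpace ℝ X] : Prop :=
  ReflexiveSpace X ∧ Rotund X ∧ KadetsKlee X

theorem hlur_of_smooth_clur (X : Type*) [NormedAddCommGroup X] [NormedSpace ℝ X]
    [CompleteSpace X] (hsm : SmoothSpace X) (hcl : CLUR X) : HLUR X := by
  intro x hx xs hxs hsum f hf hfx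
  by_contra hcon
  rw [Metric.tendsto_atTop] at hcon
  push_neg at hcon
  obtain ⟨ε, hε, hfreq⟩ := hcon
  have hfreq' : ∃ᶠ n in atTop, ε ≤ infDist (xs n) (face X f) := by
    rw [frequently_atTop]
    intro N
    obtain ⟨n, hn, hdn⟩ := hfreq N
    refine ⟨n, hn, ?_⟩
    have := Real.dist_eq (infDist (xs n) (face X f)) 0
    rw [Real.dist_eq, sub_zero, abs_of_nonneg infDist_nonneg] at hdn
    exact hdn
  obtain ⟨φ, hφ, hlow⟩ := Filter.extraction_of_frequently_atTop hfreq'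
  have htφ : Tendsto (fun n => ‖(xs ∘ φ) n + x‖) atTop (𝓝 2) :=
    hsum.comp hφ.tendsto_atTop
  obtain ⟨ψ, hψ, z, hz⟩ := hcl x hx (xs ∘ φ) (fun n => hxs (φ n)) htφ
  have hzn : ‖z‖ = 1 := by
    have : Tendsto (fun n => ‖(xs ∘ φ ∘ ψ) n‖) atTop (𝓝 ‖z‖) :=
      (continuous_norm.tendsto z).comp hz
    have h1 : Tendsto (fun n => ‖(xs ∘ φ ∘ ψ) n‖) atTop (𝓝 1) := by
      simpa [Function.comp] using tendsto_const_nhds.congr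
        (fun n => (hxs (φ (ψ n))).symm)
    exact tendsto_nhds_unique this h1
  have hzx : ‖z + x‖ = 2 := by
    have h1 : Tendsto (fun n => ‖(xs ∘ φ ∘ ψ) n + x‖) atTop (𝓝 ‖z + x‖) := by
      have : Tendsto (fun n => (xs ∘ φ ∘ ψ) n + x) atTop (𝓝 (z + x)) :=
        hz.add tendsto_const_nhds
      exact (continuous_norm.tendsto _).comp this
    have h2 : Tendsto (fun n => ‖(xs ∘ φ ∘ ψ) n + x‖) atTop (𝓝 2) :=
      htφ.comp hψ.tendsto_atTop
    exact tendsto_nhds_unique h1 h2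
  have hne : z + x ≠ 0 := by
    intro h
    rw [h, norm_zero] at hzx
    norm_num at hzx
  obtain ⟨g, hg1, hgzx⟩ := exists_dual_vector ℝ (z + x) (norm_ne_zero_iff.mpr hne)
  have hgzx' : g (z + x) = 2 := by
    simpa [hzx] using hgzx
  have hgz1 : g z ≤ 1 := by
    calc g z ≤ ‖g z‖ := le_abs_self _
    _ ≤ ‖g‖ * ‖z‖ := g.le_opNorm z
    _ = 1 := by rw [hg1, hzn, one_mul]
  have hgx1 : g x ≤ 1 := by
    calc g x ≤ ‖g x‖ := le_abs_self _
    _ ≤ ‖g‖ * ‖x‖ := g.le_opNorm x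
    _ = 1 := by rw [hg1, hx, one_mul]
  have hsum2 : g z + g x = 2 := by
    rw [← map_add]; exact hgzx'
  have hgx : g x = 1 := by linarith
  have hgz : g z = 1 := by linarith
  obtain ⟨h, _, huniq⟩ := hsm x hx
  have hgf : g = f := by
    rw [huniq g ⟨hg1, hgx⟩, huniq f ⟨hf, hfx⟩]
  have hzface : z ∈ face X f := ⟨hzn.le, by rw [← hgf]; exact hgz⟩
  have hle : ∀ n, infDist ((xs ∘ φ ∘ ψ) n) (face X f) ≤ dist ((xs ∘ φ ∘ ψ) n) z :=
    fun n => infDist_le_dist_of_mem hzface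
  have hd0 : Tendsto (fun n => dist ((xs ∘ φ ∘ ψ) n) z) atTop (𝓝 0) :=
    tendsto_iff_dist_tendsto_zero.mp hz
  have : Tendsto (fun n => infDist ((xs ∘ φ ∘ ψ) n) (face X f)) atTop (𝓝 0) := by
    refine squeeze_zero (fun n => infDist_nonneg) hle hd0
  have hεle : ε ≤ 0 := le_of_tendsto_of_tendsto tendsto_const_nhds this
    (Filter.eventually_atTop.mpr ⟨0, fun n _ => hlow (ψ n)⟩)
  linarith
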